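/- Let n ≥ 3 and let s_1, s_2 be integers with 0 ≤ s_1, s_2 ≤ n-1 and s_1 ≠ s_2. Then there exist no reals a_1, a_2 > 0 such that F4(a_1,s_1) = F4(a_2,s_2) = F6(a_1,s_1) = F6(a_2,s_2) = 0. -/

import Mathlib

/-- `F4(a,s) = a^4 + s - 6a^2 s/(n-1) - 3s(s-1)/(n-1)`. -/
noncomputable def F4 (n : ℕ) (a : ℝ) (s : ℕ) : ℝ :=
  a ^ 4 + s - 6 * a ^ 2 * s / ((n : ℝ) - 1) - 3 * s * ((s : ℝ) - 1) / ((n : ℝ) - 1)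

/-- `F6(a,s) = a^6 + s - 15(a^4+a^2+s-1)s/(n-1) + 90a^2 s(s-1)/((n-1)(n-2))
  + 30 s(s-1)(s-2)/((n-1)(n-2))`. -/
noncomputable def F6 (n : ℕ) (a : ℝ) (s : ℕ) : ℝ :=
  a ^ 6 + s - 15 * (a ^ 4 + a ^ 2 + (s : ℝ) - 1) * s / ((n : ℝ) - 1)
    + 90 * a ^ 2 * s * ((s : ℝ) - 1) / (((n : ℝ) - 1) * ((n : ℝ) - 2))
    + 30 * s * ((s : ℝ) - 1) * ((s : ℝ) - 2) / (((n : ℝ) - 1) * ((n : ℝ) - 2))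

set_option maxHeartbeats 1000000

/-- Discriminant of a real cubic with two distinct real roots is nonnegative. -/
lemma disc_nonneg_of_two_roots (a b c d x y : ℝ) (hxy : x ≠ y)
    (hx : a * x ^ 3 + b * x ^ 2 + c * x + d = 0)
    (hy : a * y ^ 3 + b * y ^ 2 + c * y + d = 0) :
    0 ≤ 18 * a * b * c * d - 4 * b ^ 3 * d + b ^ 2 * c ^ 2 - 4 * a * c ^ 3
      - 27 * a ^ 2 * d ^ 2 := by
  have hxy' : x - y ≠ 0 := sub_ne_zero.mpr hxy
  have h1 : (x - y) * (a * (x ^ 2 + x * y + y ^ 2) + b * (x + y) + c) = 0 := by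
    linear_combination hx - hy
  have h2 : (x - y) * (a * (x * y) * (x + y) + b * (x * y) - d) = 0 := by
    linear_combination y * hx - x * hy
  have hA : a * (x ^ 2 + x * y + y ^ 2) + b * (x + y) + c = 0 :=
    (mul_eq_zero.mp h1).resolve_left hxy'
  have hB : a * (x * y) * (x + y) + b * (x * y) - d = 0 :=
    (mul_eq_zero.mp h2).resolve_left hxy'
  have hc : c = -(a * (x ^ 2 + x * y + y ^ 2) + b * (x + y)) := by linarith
  have hd : d = a * (x * y) * (x + y) + b * (x * y) := by linarith
  subst hc hd
  have key : 18 * a * b * (-(a * (x ^ 2 + x * y + y ^ 2) + b * (x + y)))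
        * (a * (x * y) * (x + y) + b * (x * y))
      - 4 * b ^ 3 * (a * (x * y) * (x + y) + b * (x * y))
      + b ^ 2 * (-(a * (x ^ 2 + x * y + y ^ 2) + b * (x + y))) ^ 2
      - 4 * a * (-(a * (x ^ 2 + x * y + y ^ 2) + b * (x + y))) ^ 3
      - 27 * a ^ 2 * (a * (x * y) * (x + y) + b * (x * y)) ^ 2
      = (x - y) ^ 2 * ((a * (2 * x + y) + b) * (a * (x + 2 * y) + b)) ^ 2 := by
    ring
  rw [key]
  positivity

/-- From the two polynomial equations, the cubic condition on `σ`. -/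
lemma cubic_cond (N t σ : ℝ) (hN : 2 ≤ N) (hσ : 1 ≤ σ)
    (E4 : N * t ^ 2 - 6 * σ * t - 3 * σ ^ 2 + 3 * σ + σ * N = 0)
    (E6 : N * (N - 1) * t ^ 3 + N * (N - 1) * σ
        - 15 * (N - 1) * (t ^ 2 + t + σ - 1) * σ
        + 90 * t * σ * (σ - 1) + 30 * σ * (σ - 1) * (σ - 2) = 0) :
    -9 * (3 * N + 5) * σ ^ 3 + 9 * (3 * N ^ 2 + 12 * N + 5) * σ ^ 2
      + -(3 * N * (3 * N + 13) * (N + 2)) * σ + N ^ 2 * (N + 5) ^ 2 = 0 := by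
  have hσ0 : (0:ℝ) < σ := lt_of_lt_of_le one_pos hσ
  have hN0 : (0:ℝ) < N := by linarith
  have hpos : 0 < σ * N * (N + 9) := by
    apply mul_pos (mul_pos hσ0 hN0); linarith
  have key1 : σ * N * (N + 9) *
      ((3 * σ * (N + 2) - N * (N + 8)) * t
        + (3 * σ ^ 2 - 3 * σ * (2 * N + 1) + N * (N + 5))) = 0 := by
    linear_combination (-(N ^ 2 * (N - 1) * t) - 9 * σ * N + 9 * σ * N ^ 2) * E4
      + N ^ 2 * E6
  have key2 : (3 * σ * (N + 2) - N * (N + 8)) * t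
      + (3 * σ ^ 2 - 3 * σ * (2 * N + 1) + N * (N + 5)) = 0 :=
    (mul_eq_zero.mp key1).resolve_left (ne_of_gt hpos)
  have hres : N * (σ + 1) *
      (-9 * (3 * N + 5) * σ ^ 3 + 9 * (3 * N ^ 2 + 12 * N + 5) * σ ^ 2
        + -(3 * N * (3 * N + 13) * (N + 2)) * σ + N ^ 2 * (N + 5) ^ 2) = 0 := by
    linear_combination (3 * σ * (N + 2) - N * (N + 8)) ^ 2 * E4
      + (-(N * (3 * σ * (N + 2) - N * (N + 8)) * t)
        + 6 * σ * (3 * σ * (N + 2) - N * (N + 8))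
        + N * (3 * σ ^ 2 - 3 * σ * (2 * N + 1) + N * (N + 5))) * key2
  have hpos2 : (0:ℝ) < N * (σ + 1) := by apply mul_pos hN0; linarith
  exact (mul_eq_zero.mp hres).resolve_left (ne_of_gt hpos2)

/-- Case (iii) of the two-orbit 7-design characterization cannot occur when
`s₁ ≠ s₂`. -/
theorem no_common_zero_of_ne (n : ℕ) (hn : 3 ≤ n) (s₁ s₂ : ℕ)
    (hs₁ : s₁ ≤ n - 1) (hs₂ : s₂ ≤ n - 1) (hne : s₁ ≠ s₂) :
    ¬ ∃ a₁ a₂ : ℝ, 0 < a₁ ∧ 0 < a₂ ∧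
      F4 n a₁ s₁ = 0 ∧ F4 n a₂ s₂ = 0 ∧ F6 n a₁ s₁ = 0 ∧ F6 n a₂ s₂ = 0 := by
  rintro ⟨a₁, a₂, ha₁, ha₂, h41, h42, h61, h62⟩
  have hn3 : (3:ℝ) ≤ (n:ℝ) := by exact_mod_cast hn
  have hN1 : ((n:ℝ) - 1) ≠ 0 := by linarith
  have hN2 : ((n:ℝ) - 2) ≠ 0 := by linarith
  have hNge : (2:ℝ) ≤ (n:ℝ) - 1 := by linarith
  -- each sᵢ is at least 1
  have hs1pos : 1 ≤ s₁ := by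
    rcases Nat.eq_zero_or_pos s₁ with h | h
    · subst h
      rw [F4] at h41
      norm_num at h41
      nlinarith [pow_pos ha₁ 4]
    · exact h
  have hs2pos : 1 ≤ s₂ := by
    rcases Nat.eq_zero_or_pos s₂ with h | h
    · subst h
      rw [F4] at h42
      norm_num at h42
      nlinarith [pow_pos ha₂ 4]
    · exact h
  have hσ1 : (1:ℝ) ≤ (s₁:ℝ) := by exact_mod_cast hs1pos
  have hσ2 : (1:ℝ) ≤ (s₂:ℝ) := by exact_mod_cast hs2pos
  -- polynomial forms
  have E41 : ((n:ℝ)-1) * (a₁^2) ^ 2 - 6 * (s₁:ℝ) * (a₁^2) - 3 * (s₁:ℝ) ^ 2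
      + 3 * (s₁:ℝ) + (s₁:ℝ) * ((n:ℝ)-1) = 0 := by
    rw [F4] at h41; field_simp at h41; linear_combination h41
  have E42 : ((n:ℝ)-1) * (a₂^2) ^ 2 - 6 * (s₂:ℝ) * (a₂^2) - 3 * (s₂:ℝ) ^ 2
      + 3 * (s₂:ℝ) + (s₂:ℝ) * ((n:ℝ)-1) = 0 := by
    rw [F4] at h42; field_simp at h42; linear_combination h42
  have E61 : ((n:ℝ)-1) * (((n:ℝ)-1) - 1) * (a₁^2) ^ 3 + ((n:ℝ)-1) * (((n:ℝ)-1) - 1) * (s₁:ℝ)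
      - 15 * (((n:ℝ)-1) - 1) * ((a₁^2) ^ 2 + (a₁^2) + (s₁:ℝ) - 1) * (s₁:ℝ)
      + 90 * (a₁^2) * (s₁:ℝ) * ((s₁:ℝ) - 1) + 30 * (s₁:ℝ) * ((s₁:ℝ) - 1) * ((s₁:ℝ) - 2) = 0 := by
    have hX : (((n:ℝ)-1)^2*((n:ℝ)-2)) ≠ 0 := mul_ne_zero (pow_ne_zero 2 hN1) hN2
    apply mul_left_cancel₀ hX
    rw [mul_zero]
    rw [F6] at h61; field_simp at h61; linear_combination ((n:ℝ)-1)^2*((n:ℝ)-2) * h61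
  have E62 : ((n:ℝ)-1) * (((n:ℝ)-1) - 1) * (a₂^2) ^ 3 + ((n:ℝ)-1) * (((n:ℝ)-1) - 1) * (s₂:ℝ)
      - 15 * (((n:ℝ)-1) - 1) * ((a₂^2) ^ 2 + (a₂^2) + (s₂:ℝ) - 1) * (s₂:ℝ)
      + 90 * (a₂^2) * (s₂:ℝ) * ((s₂:ℝ) - 1) + 30 * (s₂:ℝ) * ((s₂:ℝ) - 1) * ((s₂:ℝ) - 2) = 0 := by
    have hX : (((n:ℝ)-1)^2*((n:ℝ)-2)) ≠ 0 := mul_ne_zero (pow_ne_zero 2 hN1) hN2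
    apply mul_left_cancel₀ hX
    rw [mul_zero]
    rw [F6] at h62; field_simp at h62; linear_combination ((n:ℝ)-1)^2*((n:ℝ)-2) * h62
  have hC1 := cubic_cond ((n:ℝ)-1) (a₁^2) (s₁:ℝ) hNge hσ1 E41 E61
  have hC2 := cubic_cond ((n:ℝ)-1) (a₂^2) (s₂:ℝ) hNge hσ2 E42 E62
  have hne' : (s₁:ℝ) ≠ (s₂:ℝ) := by exact_mod_cast hne
  set N : ℝ := (n:ℝ) - 1 with hNdef
  have hdisc := disc_nonneg_of_two_roots (-9 * (3 * N + 5)) (9 * (3 * N ^ 2 + 12 * N + 5))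
    (-(3 * N * (3 * N + 13) * (N + 2))) (N ^ 2 * (N + 5) ^ 2) (s₁:ℝ) (s₂:ℝ) hne' hC1 hC2
  have hfac : 18 * (-9 * (3 * N + 5)) * (9 * (3 * N ^ 2 + 12 * N + 5))
        * (-(3 * N * (3 * N + 13) * (N + 2))) * (N ^ 2 * (N + 5) ^ 2)
      - 4 * (9 * (3 * N ^ 2 + 12 * N + 5)) ^ 3 * (N ^ 2 * (N + 5) ^ 2)
      + (9 * (3 * N ^ 2 + 12 * N + 5)) ^ 2 * (-(3 * N * (3 * N + 13) * (N + 2))) ^ 2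
      - 4 * (-9 * (3 * N + 5)) * (-(3 * N * (3 * N + 13) * (N + 2))) ^ 3
      - 27 * (-9 * (3 * N + 5)) ^ 2 * (N ^ 2 * (N + 5) ^ 2) ^ 2
      = 3888 * N ^ 2 * (N - 1) ^ 2 * (N + 3) * (N + 5) * (55 - 30 * N - 9 * N ^ 2) := by
    ring
  rw [hfac] at hdisc
  have hN0 : (0:ℝ) < N := by linarith
  have h1 : 55 - 30 * N - 9 * N ^ 2 < 0 := by nlinarith
  have h2 : 0 < 3888 * N ^ 2 * (N - 1) ^ 2 * (N + 3) * (N + 5) := by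
    have hNm1 : (0:ℝ) < N - 1 := by linarith
    have hN3 : (0:ℝ) < N + 3 := by linarith
    have hN5 : (0:ℝ) < N + 5 := by linarith
    have ha : (0:ℝ) < 3888 * N ^ 2 := by positivity
    have hb : (0:ℝ) < (N - 1) ^ 2 := by positivity
    exact mul_pos (mul_pos (mul_pos ha hb) hN3) hN5
  have h3 : 3888 * N ^ 2 * (N - 1) ^ 2 * (N + 3) * (N + 5) * (55 - 30 * N - 9 * N ^ 2) < 0 :=
    mul_neg_of_pos_of_neg h2 h1
  linarith
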